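/- Consider the F^{(α)}-potential φ(ξ) = -log ∫ (1 + α ξ·h(x))^{-1/α} dμ(x) for α > 0, where μ is a probability measure and h : X → ℝ₊₊^d. Under regularity (finiteness, 1 + α ξ·h > 0 on Ω, differentiation under the integral sign), the Hessian of Φ = e^{αφ} is ∂²Φ/∂ξⁱ∂ξʲ = -α(1+α) Φ(ξ) Cov_ξ(Z_ξⁱ, Z_ξʲ), where Z_ξ = h(X)/(1 + α ξ·h(X)) and the covariance is under the density p(x,ξ) = (1 + α ξ·h(x))^{-1/α} e^{φ(ξ)}. In particular Φ is concave, so φ is α-exponentially concave on Ω. -/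

import Mathlib

set_option linter.unusedSectionVars false
set_option linter.unusedVariables false
set_option maxHeartbeats 1000000


open scoped RealInnerProductSpace
open MeasureTheory

/-- The normalizing integral of the `F^{(α)}`-family. -/
noncomputable def Fint {d : ℕ} {X : Type*} [MeasurableSpace X] (μ : Measure X)
    (α : ℝ) (h : X → EuclideanSpace ℝ (Fin d))
    (ξ : EuclideanSpace ℝ (Fin d)) : ℝ :=
  ∫ x, (1 + α * ⟪ξ, h x⟫) ^ (-(1/α)) ∂μ

/-- The `F^{(α)}`-potential `φ(ξ) = -log ∫ (1 + α ξ·h)^{-1/α} dμ`. -/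
noncomputable def Fpot {d : ℕ} {X : Type*} [MeasurableSpace X] (μ : Measure X)
    (α : ℝ) (h : X → EuclideanSpace ℝ (Fin d))
    (ξ : EuclideanSpace ℝ (Fin d)) : ℝ :=
  -Real.log (Fint μ α h ξ)

/-- The density `p(x,ξ) = (1 + α ξ·h(x))^{-1/α} e^{φ(ξ)}` of the `F^{(α)}`-family. -/
noncomputable def Fdens {d : ℕ} {X : Type*} [MeasurableSpace X] (μ : Measure X)
    (α : ℝ) (h : X → EuclideanSpace ℝ (Fin d))
    (ξ : EuclideanSpace ℝ (Fin d)) (x : X) : ℝ :=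
  (1 + α * ⟪ξ, h x⟫) ^ (-(1/α)) * Real.exp (Fpot μ α h ξ)

/-- `v·Z_ξ` where `Z_ξ = h(X)/(1 + α ξ·h(X))`. -/
noncomputable def Zstat {d : ℕ} {X : Type*} (α : ℝ)
    (h : X → EuclideanSpace ℝ (Fin d))
    (ξ v : EuclideanSpace ℝ (Fin d)) (x : X) : ℝ :=
  ⟪v, h x⟫ / (1 + α * ⟪ξ, h x⟫)

section Aux

variable {d : ℕ} {X : Type*} [MeasurableSpace X] (μ : Measure X) [IsProbabilityMeasure μ]
  (α : ℝ) (h : X → EuclideanSpace ℝ (Fin d))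

/-- `J1` matching `hDUI0`/`hDUI1`. -/
noncomputable def J1 (ξ v : EuclideanSpace ℝ (Fin d)) : ℝ :=
  ∫ x, ⟪v, h x⟫ * (1 + α * ⟪ξ, h x⟫) ^ (-(1/α) - 1) ∂μ

noncomputable def J2 (ξ v : EuclideanSpace ℝ (Fin d)) : ℝ :=
  ∫ x, ⟪v, h x⟫ ^ 2 * (1 + α * ⟪ξ, h x⟫) ^ (-(1/α) - 2) ∂μ

/-- first-derivative value of `Φ` along direction `v` -/
noncomputable def F1 (ξ v : EuclideanSpace ℝ (Fin d)) : ℝ :=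
  α * Real.exp (α * Fpot μ α h ξ) * J1 μ α h ξ v / Fint μ α h ξ

lemma Fint_pos (ξ : EuclideanSpace ℝ (Fin d))
    (hp : ∀ x, 0 < 1 + α * ⟪ξ, h x⟫)
    (hi : Integrable (fun x => (1 + α * ⟪ξ, h x⟫) ^ (-(1/α))) μ) :
    0 < Fint μ α h ξ := by
  rw [Fint, integral_pos_iff_support_of_nonneg]
  · have : Function.support (fun x => (1 + α * ⟪ξ, h x⟫) ^ (-(1/α))) = Set.univ := by
      apply Set.eq_univ_iff_forall.2
      intro x
      exact ne_of_gt (Real.rpow_pos_of_pos (hp x) _)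
    rw [this]
    simp
  · intro x
    exact (Real.rpow_pos_of_pos (hp x) _).le
  · exact hi

lemma exp_Fpot (ξ : EuclideanSpace ℝ (Fin d)) (hG : 0 < Fint μ α h ξ) :
    Real.exp (Fpot μ α h ξ) = (Fint μ α h ξ)⁻¹ := by
  rw [Fpot, Real.exp_neg, Real.exp_log hG]

lemma hasDerivAt_shift {F : EuclideanSpace ℝ (Fin d) → ℝ}
    {ξ v : EuclideanSpace ℝ (Fin d)} {D t : ℝ}
    (hd : HasDerivAt (fun s : ℝ => F (ξ + t • v + s • v)) D 0) :
    HasDerivAt (fun s : ℝ => F (ξ + s • v)) D t := by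
  have h1 : HasDerivAt (fun s : ℝ => s - t) 1 t := (hasDerivAt_id t).sub_const t
  have h3 := HasDerivAt.comp_of_eq (x := t) hd h1 (sub_self t).symm
  rw [mul_one] at h3
  have h4 : (fun s : ℝ => F (ξ + s • v)) = ((fun s => F (ξ + t • v + s • v)) ∘ fun s => s - t) := by
    funext s
    show F (ξ + s • v) = F (ξ + t • v + (s - t) • v)
    congr 1
    module
  rw [h4]; exact h3

lemma hasDerivAt_Phi0 (ξ v : EuclideanSpace ℝ (Fin d)) (hG : 0 < Fint μ α h ξ)
    (hd : HasDerivAt (fun s : ℝ => Fint μ α h (ξ + s • v)) (-J1 μ α h ξ v) 0) :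
    HasDerivAt (fun s : ℝ => Real.exp (α * Fpot μ α h (ξ + s • v))) (F1 μ α h ξ v) 0 := by
  have h0 : ξ + (0 : ℝ) • v = ξ := by simp
  have hne : (fun s : ℝ => Fint μ α h (ξ + s • v)) 0 ≠ 0 := by
    simp only [h0]; exact hG.ne'
  have hlog := hd.log hne
  have key := (hlog.const_mul (-α)).exp
  have hfe : (fun s : ℝ => Real.exp (α * Fpot μ α h (ξ + s • v)))
      = (fun s : ℝ => Real.exp (-α * Real.log (Fint μ α h (ξ + s • v)))) := by
    funext s
    simp only [Fpot, mul_neg, neg_mul]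
  rw [hfe]
  convert key using 1
  simp only [h0, F1, Fpot, mul_neg, neg_mul]
  ring

lemma int_Z1 (ξ v : EuclideanSpace ℝ (Fin d))
    (hp : ∀ x, 0 < 1 + α * ⟪ξ, h x⟫) (hG : 0 < Fint μ α h ξ) :
    ∫ x, Zstat α h ξ v x * Fdens μ α h ξ x ∂μ = J1 μ α h ξ v / Fint μ α h ξ := by
  have hpt : ∀ x, Zstat α h ξ v x * Fdens μ α h ξ x
      = (⟪v, h x⟫ * (1 + α * ⟪ξ, h x⟫) ^ (-(1/α) - 1)) * Real.exp (Fpot μ α h ξ) := by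
    intro x
    rw [Zstat, Fdens, Real.rpow_sub (hp x), Real.rpow_one]
    field_simp
  simp only [hpt]
  rw [integral_mul_const, exp_Fpot μ α h ξ hG, ← J1, div_eq_mul_inv]

lemma int_Z2 (ξ v : EuclideanSpace ℝ (Fin d))
    (hp : ∀ x, 0 < 1 + α * ⟪ξ, h x⟫) (hG : 0 < Fint μ α h ξ) :
    ∫ x, Zstat α h ξ v x ^ 2 * Fdens μ α h ξ x ∂μ = J2 μ α h ξ v / Fint μ α h ξ := by
  have hpt : ∀ x, Zstat α h ξ v x ^ 2 * Fdens μ α h ξ x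
      = (⟪v, h x⟫ ^ 2 * (1 + α * ⟪ξ, h x⟫) ^ (-(1/α) - 2)) * Real.exp (Fpot μ α h ξ) := by
    intro x
    rw [Zstat, Fdens, show (-(1/α) - 2 : ℝ) = -(1/α) - (2:ℕ) by norm_num,
      Real.rpow_sub (hp x), Real.rpow_natCast]
    field_simp
  simp only [hpt]
  rw [integral_mul_const, exp_Fpot μ α h ξ hG, ← J2, div_eq_mul_inv]

lemma int_Fdens (ξ : EuclideanSpace ℝ (Fin d)) (hG : 0 < Fint μ α h ξ) :
    ∫ x, Fdens μ α h ξ x ∂μ = 1 := by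
  simp only [Fdens]
  rw [integral_mul_const, exp_Fpot μ α h ξ hG, ← Fint, mul_inv_cancel₀ hG.ne']

lemma var_nonneg (ξ v : EuclideanSpace ℝ (Fin d))
    (hnn : ∀ x, 0 ≤ Fdens μ α h ξ x)
    (h0 : Integrable (fun x => Fdens μ α h ξ x) μ)
    (h1 : Integrable (fun x => Zstat α h ξ v x * Fdens μ α h ξ x) μ)
    (h2 : Integrable (fun x => Zstat α h ξ v x ^ 2 * Fdens μ α h ξ x) μ)
    (hμ1 : ∫ x, Fdens μ α h ξ x ∂μ = 1) :
    (∫ x, Zstat α h ξ v x * Fdens μ α h ξ x ∂μ) ^ 2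
      ≤ ∫ x, Zstat α h ξ v x ^ 2 * Fdens μ α h ξ x ∂μ := by
  set Z := Zstat α h ξ v with hZ
  set q := Fdens μ α h ξ with hq
  set m := ∫ x, Z x * q x ∂μ with hm
  have key : 0 ≤ ∫ x, (Z x - m) ^ 2 * q x ∂μ :=
    integral_nonneg fun x => mul_nonneg (sq_nonneg _) (hnn x)
  have expand : (fun x => (Z x - m) ^ 2 * q x)
      = fun x => (Z x ^ 2 * q x - (2 * m) * (Z x * q x)) + m ^ 2 * q x := by
    funext x; ring
  rw [expand, integral_add (by exact (h2.sub (h1.const_mul (2*m)))) (h0.const_mul (m^2)),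
    integral_sub h2 (h1.const_mul (2*m)), integral_const_mul, integral_const_mul, hμ1] at key
  nlinarith [key]

lemma hasDerivAt_F1_0 (ξ v : EuclideanSpace ℝ (Fin d))
    (hp : ∀ x, 0 < 1 + α * ⟪ξ, h x⟫) (hG : 0 < Fint μ α h ξ)
    (hd0 : HasDerivAt (fun t : ℝ => Fint μ α h (ξ + t • v)) (-J1 μ α h ξ v) 0)
    (hd1 : HasDerivAt (fun t : ℝ => J1 μ α h (ξ + t • v) v) (-(1 + α) * J2 μ α h ξ v) 0) :
    HasDerivAt (fun s : ℝ => F1 μ α h (ξ + s • v) v)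
      (-(α * (1 + α)) * Real.exp (α * Fpot μ α h ξ) *
        ((∫ x, Zstat α h ξ v x ^ 2 * Fdens μ α h ξ x ∂μ) -
          (∫ x, Zstat α h ξ v x * Fdens μ α h ξ x ∂μ) ^ 2)) 0 := by
  have h0 : ξ + (0 : ℝ) • v = ξ := by simp
  have hΦ := hasDerivAt_Phi0 μ α h ξ v hG hd0
  have hden : (fun s : ℝ => Fint μ α h (ξ + s • v)) 0 ≠ 0 := by
    simp only [h0, zero_smul, add_zero]; exact hG.ne'
  have hdiv := (hΦ.mul hd1).div hd0 hden
  have hfin := hdiv.const_mul α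
  have hfe : (fun s : ℝ => F1 μ α h (ξ + s • v) v)
      = fun s : ℝ => α * ((fun s : ℝ => Real.exp (α * Fpot μ α h (ξ + s • v))) s *
          (fun t : ℝ => J1 μ α h (ξ + t • v) v) s / (fun s : ℝ => Fint μ α h (ξ + s • v)) s) := by
    funext s
    rw [F1]
    ring
  rw [hfe]
  refine hfin.congr_deriv ?_
  symm
  simp only [h0, zero_smul, add_zero, Pi.mul_apply]
  rw [int_Z1 μ α h ξ v hp hG, int_Z2 μ α h ξ v hp hG, F1]
  field_simp
  ring

end Aux

/-- for the `F^{(α)}`-family, the Hessian of `Φ = e^{αφ}` is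
`-α(1+α) Φ(ξ) Cov_ξ(Z_ξ)` (as a quadratic form); in particular `Φ` is concave,
i.e. `φ` is `α`-exponentially concave on `Ω`. -/
theorem stmt13 {d : ℕ} {X : Type*} [MeasurableSpace X] (μ : Measure X)
    [IsProbabilityMeasure μ] (α : ℝ) (hα : 0 < α)
    (h : X → EuclideanSpace ℝ (Fin d)) (hmeas : Measurable h)
    (hh : ∀ x, ∀ i, 0 < h x i)
    (Ω : Set (EuclideanSpace ℝ (Fin d))) (hΩ : IsOpen Ω) (hconv : Convex ℝ Ω)
    (hid : ∀ ξ ξ' : EuclideanSpace ℝ (Fin d),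
      (∀ᵐ x ∂μ, ⟪ξ, h x⟫ = ⟪ξ', h x⟫) → ξ = ξ')
    (hpos : ∀ ξ ∈ Ω, ∀ x, 0 < 1 + α * ⟪ξ, h x⟫)
    (hint : ∀ ξ ∈ Ω, ∀ v : EuclideanSpace ℝ (Fin d), ∀ k : ℕ, k ≤ 2 →
      Integrable (fun x => Zstat α h ξ v x ^ k *
        (1 + α * ⟪ξ, h x⟫) ^ (-(1/α))) μ)
    -- differentiation under the integral sign:
    (hDUI0 : ∀ ξ ∈ Ω, ∀ v : EuclideanSpace ℝ (Fin d),
      HasDerivAt (fun t : ℝ => Fint μ α h (ξ + t • v))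
        (-∫ x, ⟪v, h x⟫ * (1 + α * ⟪ξ, h x⟫) ^ (-(1/α) - 1) ∂μ) 0)
    (hDUI1 : ∀ ξ ∈ Ω, ∀ v : EuclideanSpace ℝ (Fin d),
      HasDerivAt (fun t : ℝ =>
          ∫ x, ⟪v, h x⟫ * (1 + α * ⟪ξ + t • v, h x⟫) ^ (-(1/α) - 1) ∂μ)
        (-(1 + α) *
          ∫ x, ⟪v, h x⟫ ^ 2 * (1 + α * ⟪ξ, h x⟫) ^ (-(1/α) - 2) ∂μ) 0) :
    (∀ ξ ∈ Ω, ∀ v : EuclideanSpace ℝ (Fin d),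
      deriv (fun t : ℝ =>
          deriv (fun s : ℝ => Real.exp (α * Fpot μ α h (ξ + s • v))) t) 0 =
        -(α * (1 + α)) * Real.exp (α * Fpot μ α h ξ) *
          ((∫ x, Zstat α h ξ v x ^ 2 * Fdens μ α h ξ x ∂μ) -
            (∫ x, Zstat α h ξ v x * Fdens μ α h ξ x ∂μ) ^ 2)) ∧
    ConcaveOn ℝ Ω (fun ξ => Real.exp (α * Fpot μ α h ξ)) := by
  have hbase : ∀ ξ ∈ Ω, Integrable (fun x => (1 + α * ⟪ξ, h x⟫) ^ (-(1/α))) μ := by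
    intro ξ hξ
    simpa using hint ξ hξ 0 0 (by norm_num)
  have hGpos : ∀ ξ ∈ Ω, 0 < Fint μ α h ξ := fun ξ hξ =>
    Fint_pos μ α h ξ (hpos ξ hξ) (hbase ξ hξ)
  have hA : ∀ (ξ v : EuclideanSpace ℝ (Fin d)) (t : ℝ), ξ + t • v ∈ Ω →
      HasDerivAt (fun s : ℝ => Real.exp (α * Fpot μ α h (ξ + s • v)))
        (F1 μ α h (ξ + t • v) v) t := by
    intro ξ v t hm
    exact hasDerivAt_shift (F := fun η => Real.exp (α * Fpot μ α h η))
      (hasDerivAt_Phi0 μ α h (ξ + t • v) v (hGpos _ hm) (hDUI0 _ hm v))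
  have hev : ∀ (ξ v : EuclideanSpace ℝ (Fin d)) (t : ℝ), ξ + t • v ∈ Ω →
      ∀ᶠ s in nhds t, ξ + s • v ∈ Ω := by
    intro ξ v t hm
    have hc : Continuous fun s : ℝ => ξ + s • v :=
      continuous_const.add (continuous_id.smul continuous_const)
    exact hc.continuousAt.eventually_mem (hΩ.mem_nhds hm)
  have hB : ∀ (ξ v : EuclideanSpace ℝ (Fin d)) (t : ℝ), ξ + t • v ∈ Ω →
      HasDerivAt (deriv (fun s : ℝ => Real.exp (α * Fpot μ α h (ξ + s • v))))
        (-(α * (1 + α)) * Real.exp (α * Fpot μ α h (ξ + t • v)) *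
          ((∫ x, Zstat α h (ξ + t • v) v x ^ 2 * Fdens μ α h (ξ + t • v) x ∂μ) -
            (∫ x, Zstat α h (ξ + t • v) v x * Fdens μ α h (ξ + t • v) x ∂μ) ^ 2)) t := by
    intro ξ v t hm
    have hK0 := hasDerivAt_F1_0 μ α h (ξ + t • v) v (hpos _ hm) (hGpos _ hm)
      (hDUI0 _ hm v) (hDUI1 _ hm v)
    have hKt := hasDerivAt_shift (F := fun η => F1 μ α h η v) hK0
    have heq : (fun s : ℝ => F1 μ α h (ξ + s • v) v)
        =ᶠ[nhds t] deriv (fun s : ℝ => Real.exp (α * Fpot μ α h (ξ + s • v))) := by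
      filter_upwards [hev ξ v t hm] with s hs
      exact ((hA ξ v s hs).deriv).symm
    exact hKt.congr_of_eventuallyEq heq.symm
  have hq_nn : ∀ ξ ∈ Ω, ∀ x, 0 ≤ Fdens μ α h ξ x := fun ξ hξ x =>
    mul_nonneg (Real.rpow_nonneg (hpos ξ hξ x).le _) (Real.exp_pos _).le
  have hint' : ∀ ξ ∈ Ω, ∀ v : EuclideanSpace ℝ (Fin d), ∀ k : ℕ, k ≤ 2 →
      Integrable (fun x => Zstat α h ξ v x ^ k * Fdens μ α h ξ x) μ := by
    intro ξ hξ v k hk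
    have hfe : (fun x => Zstat α h ξ v x ^ k * Fdens μ α h ξ x)
        = fun x => (Zstat α h ξ v x ^ k * (1 + α * ⟪ξ, h x⟫) ^ (-(1/α)))
            * Real.exp (Fpot μ α h ξ) := by
      funext x; rw [Fdens]; ring
    rw [hfe]
    exact (hint ξ hξ v k hk).mul_const _
  have hvar : ∀ ξ ∈ Ω, ∀ v : EuclideanSpace ℝ (Fin d),
      (∫ x, Zstat α h ξ v x * Fdens μ α h ξ x ∂μ) ^ 2
        ≤ ∫ x, Zstat α h ξ v x ^ 2 * Fdens μ α h ξ x ∂μ := by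
    intro ξ hξ v
    refine var_nonneg μ α h ξ v (hq_nn ξ hξ) ?_ ?_ ?_ (int_Fdens μ α h ξ (hGpos ξ hξ))
    · simpa using hint' ξ hξ v 0 (by norm_num)
    · simpa using hint' ξ hξ v 1 (by norm_num)
    · exact hint' ξ hξ v 2 le_rfl
  have hKle : ∀ ξ ∈ Ω, ∀ v : EuclideanSpace ℝ (Fin d),
      -(α * (1 + α)) * Real.exp (α * Fpot μ α h ξ) *
        ((∫ x, Zstat α h ξ v x ^ 2 * Fdens μ α h ξ x ∂μ) -
          (∫ x, Zstat α h ξ v x * Fdens μ α h ξ x ∂μ) ^ 2) ≤ 0 := by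
    intro ξ hξ v
    have hnn : 0 ≤ (α * (1 + α)) * Real.exp (α * Fpot μ α h ξ) *
        ((∫ x, Zstat α h ξ v x ^ 2 * Fdens μ α h ξ x ∂μ) -
          (∫ x, Zstat α h ξ v x * Fdens μ α h ξ x ∂μ) ^ 2) := by
      apply mul_nonneg (mul_nonneg _ (Real.exp_pos _).le) (sub_nonneg.2 (hvar ξ hξ v))
      nlinarith [hα]
    nlinarith [hnn]
  constructor
  · intro ξ hξ v
    have h00 : ξ + (0 : ℝ) • v ∈ Ω := by simpa using hξ
    have := (hB ξ v 0 h00).deriv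
    simpa using this
  · refine ⟨hconv, ?_⟩
    intro x hx y hy a b ha hb hab
    set v : EuclideanSpace ℝ (Fin d) := y - x with hvdef
    set D : Set ℝ := {t : ℝ | x + t • v ∈ Ω} with hDdef
    have hDopen : IsOpen D := by
      have hc : Continuous fun t : ℝ => x + t • v :=
        continuous_const.add (continuous_id.smul continuous_const)
      exact hΩ.preimage hc
    have hDconv : Convex ℝ D := by
      intro t1 h1 t2 h2 c e hc he hce
      show x + (c • t1 + e • t2) • v ∈ Ω
      simp only [smul_eq_mul]
      have hxeq : x + (c * t1 + e * t2) • v = c • (x + t1 • v) + e • (x + t2 • v) := by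
        have hx1 : c • (x + t1 • v) + e • (x + t2 • v)
            = (c + e) • x + (c * t1 + e * t2) • v := by module
        rw [hx1, hce, one_smul]
      rw [hxeq]
      exact hconv h1 h2 hc he hce
    have hconc : ConcaveOn ℝ D (fun s : ℝ => Real.exp (α * Fpot μ α h (x + s • v))) := by
      apply concaveOn_of_deriv2_nonpos hDconv
      · intro t ht
        exact (hA x v t ht).continuousAt.continuousWithinAt
      · rw [hDopen.interior_eq]
        intro t ht
        exact (hA x v t ht).differentiableAt.differentiableWithinAt
      · rw [hDopen.interior_eq]
        intro t ht
        exact (hB x v t ht).differentiableAt.differentiableWithinAt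
      · rw [hDopen.interior_eq]
        intro t ht
        have h2d := (hB x v t ht).deriv
        show deriv (deriv fun s : ℝ => Real.exp (α * Fpot μ α h (x + s • v))) t ≤ 0
        rw [h2d]
        exact hKle (x + t • v) ht v
    have h0D : (0 : ℝ) ∈ D := by
      show x + (0 : ℝ) • v ∈ Ω
      simpa using hx
    have h1D : (1 : ℝ) ∈ D := by
      show x + (1 : ℝ) • v ∈ Ω
      have : x + (1 : ℝ) • v = y := by rw [hvdef]; module
      rwa [this]
    have hcc := hconc.2 h0D h1D ha hb hab
    have e2 : a • (0 : ℝ) + b • 1 = b := by simp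
    rw [e2] at hcc
    have e0 : x + (0 : ℝ) • v = x := by simp
    have e1 : x + (1 : ℝ) • v = y := by rw [hvdef]; module
    have e3 : x + b • v = a • x + b • y := by
      have hx1 : a • x + b • y = (a + b) • x + b • (y - x) := by module
      rw [hx1, hab, one_smul, hvdef]
    simp only [e0, e1, e3] at hcc
    exact hcc
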